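/- Suppose F: ℂ → ℂ is holomorphic, not identically zero, with F(z+1) = F(z) and F(z+τ) = e^{-iπKτ}e^{-2πiKz}F(z) for Im τ > 0 and a positive integer K. Then the space of such functions F has complex dimension exactly K. -/

import Mathlib

noncomputable section

open scoped Real

/-- The space of entire functions `F` with `F(z+1) = F(z)` and
`F(z+τ) = e^{-iπKτ} e^{-2πiKz} F(z)` (level-`K` theta functions). -/
def thetaSpace (K : ℕ) (τ : ℂ) : Submodule ℂ (ℂ → ℂ) where
  carrier := {F | Differentiable ℂ F ∧ (∀ z, F (z + 1) = F z) ∧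
    ∀ z, F (z + τ) = Complex.exp (-(π * Complex.I * K * τ)) *
      (Complex.exp (-(2 * π * Complex.I * K * z)) * F z)}
  add_mem' := by
    rintro a b ⟨ha1, ha2, ha3⟩ ⟨hb1, hb2, hb3⟩
    refine ⟨ha1.add hb1, fun z => ?_, fun z => ?_⟩
    · simp [Pi.add_apply, ha2 z, hb2 z]
    · simp only [Pi.add_apply, ha3 z, hb3 z]; ring
  zero_mem' := ⟨differentiable_const 0, fun z => rfl, fun z => by simp⟩
  smul_mem' := by
    rintro c a ⟨ha1, ha2, ha3⟩
    refine ⟨ha1.const_smul c, fun z => ?_, fun z => ?_⟩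
    · simp [Pi.smul_apply, ha2 z]
    · simp only [Pi.smul_apply, smul_eq_mul, ha3 z]; ring

namespace ThetaDimAux

open Complex MeasureTheory intervalIntegral Filter
open scoped Topology

/-! ### Shifting the contour of integration for periodic entire functions -/

lemma shift_integral (G : ℂ → ℂ) (hG : Differentiable ℂ G) (hper : ∀ z, G (z + 1) = G z)
    (w : ℂ) : ∫ x in (0:ℝ)..1, G (x + w) = ∫ x in (0:ℝ)..1, G x := by
  have vert : ∀ y : ℝ, ∫ x in (0:ℝ)..1, G (x + y * I) = ∫ x in (0:ℝ)..1, G x := by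
    intro y
    have h := Complex.integral_boundary_rect_eq_zero_of_differentiableOn G 0
      (1 + y * I) (hG.differentiableOn)
    simp only [Complex.add_re, Complex.add_im, Complex.one_re, Complex.one_im, Complex.mul_I_re,
      Complex.mul_I_im, Complex.ofReal_re, Complex.ofReal_im, Complex.zero_re, Complex.zero_im,
      neg_zero, add_zero, zero_add, Complex.ofReal_zero, Complex.ofReal_one] at h
    have hv : ∀ t : ℝ, G (1 + t * I) = G ((t:ℂ) * I) := fun t => by
      rw [← hper ((t:ℂ) * I)]; ring_nf
    rw [intervalIntegral.integral_congr (g := fun t : ℝ => G ((t:ℂ) * I)) (fun t _ => hv t)] at h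
    have h3 : ∀ x : ℝ, G ((x:ℂ) + (0:ℂ) * I) = G x := fun x => by norm_num
    rw [intervalIntegral.integral_congr (fun x (_ : x ∈ _) => h3 x)] at h
    push_cast at h
    linear_combination -h
  have per : Function.Periodic (fun u : ℝ => G ((u:ℂ) + (w.im:ℂ) * I)) 1 := fun u => by
    simp only []
    rw [← hper ((u:ℂ) + (w.im:ℂ) * I)]
    push_cast; ring_nf
  calc ∫ x in (0:ℝ)..1, G (x + w)
      = ∫ x in (0:ℝ)..1, (fun u : ℝ => G ((u:ℂ) + (w.im:ℂ) * I)) (x + w.re) := by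
        refine intervalIntegral.integral_congr fun x _ => ?_
        simp only []
        congr 1
        push_cast
        rw [add_assoc, Complex.re_add_im]
    _ = ∫ x in (0:ℝ)+w.re..1+w.re, G ((x:ℂ) + (w.im:ℂ) * I) :=
        intervalIntegral.integral_comp_add_right (fun u : ℝ => G ((u:ℂ) + (w.im:ℂ) * I)) w.re
    _ = ∫ x in (0:ℝ)..1, G ((x:ℂ) + (w.im:ℂ) * I) := by
        have := per.intervalIntegral_add_eq w.re 0
        simpa [add_comm] using this
    _ = ∫ x in (0:ℝ)..1, G x := vert w.im

/-! ### Uniqueness of Fourier coefficients for continuous periodic functions -/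

lemma fourier_unique (f : ℝ → ℂ) (hf : Continuous f) (hp : Function.Periodic f 1)
    (h0 : ∀ n : ℤ, (∫ x in (0:ℝ)..1, Complex.exp (-(2*π*I*n*x)) * f x) = 0) :
    ∀ x : ℝ, f x = 0 := by
  haveI : Fact ((0:ℝ) < 1) := ⟨one_pos⟩
  let g : C(AddCircle (1:ℝ), ℂ) := ⟨hp.lift,
    (QuotientAddGroup.isQuotientMap_mk _).continuous_iff.mpr
      (by simpa [Function.comp_def, hp.lift_coe] using hf)⟩
  have hcoeff : ∀ n : ℤ, fourierCoeff (⇑g) n = 0 := by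
    intro n
    rw [fourierCoeff_eq_intervalIntegral _ n 0]
    rw [show ∫ x in (0:ℝ)..0+1, (fourier (-n) (x : AddCircle (1:ℝ)) : ℂ) • g (x : AddCircle (1:ℝ))
        = ∫ x in (0:ℝ)..1, Complex.exp (-(2*π*I*n*x)) * f x by
      rw [zero_add]
      refine intervalIntegral.integral_congr fun x _ => ?_
      rw [fourier_coe_apply, show g ((x:ℝ) : AddCircle (1:ℝ)) = f x from hp.lift_coe x,
        smul_eq_mul]
      congr 1
      push_cast
      ring_nf]
    rw [h0 n]
    simp
  have hg0 : ⇑g = 0 := by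
    have hL : (ContinuousMap.toLp (E := ℂ) 2 (AddCircle.haarAddCircle) ℂ) g = 0 := by
      have hrepr : fourierBasis.repr
          ((ContinuousMap.toLp (E := ℂ) 2 AddCircle.haarAddCircle ℂ) g) = 0 := by
        ext n
        rw [fourierBasis_repr, fourierCoeff_toLp, hcoeff n]
        rfl
      exact fourierBasis.repr.injective (hrepr.trans (map_zero _).symm)
    have hae : ⇑g =ᵐ[AddCircle.haarAddCircle] 0 := by
      have h1 := ContinuousMap.coeFn_toLp (p := 2) (𝕜 := ℂ) AddCircle.haarAddCircle g
      rw [hL] at h1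
      exact ((Lp.coeFn_zero ℂ 2 _).symm.trans h1).symm
    exact (Continuous.ae_eq_iff_eq AddCircle.haarAddCircle g.continuous continuous_const).mp hae
  intro x
  have := congrFun hg0 ((x : ℝ) : AddCircle (1:ℝ))
  rwa [show g ((x : ℝ) : AddCircle (1:ℝ)) = f x from hp.lift_coe x] at this

/-! ### A theta function with vanishing low Fourier coefficients vanishes identically -/

lemma theta_eq_zero (K : ℕ) (hK : 0 < K) (τ : ℂ) (hτ : 0 < τ.im) (F : ℂ → ℂ)
    (hFd : Differentiable ℂ F) (hF1 : ∀ z, F (z+1) = F z)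
    (hF2 : ∀ z, F (z + τ) = Complex.exp (-(π * I * K * τ)) *
      (Complex.exp (-(2 * π * I * K * z)) * F z))
    (h0 : ∀ r : Fin K, (∫ x in (0:ℝ)..1, Complex.exp (-(2*π*I*(r:ℕ)*x)) * F x) = 0) :
    F = 0 := by
  set a : ℤ → ℂ := fun n => ∫ x in (0:ℝ)..1, Complex.exp (-(2*π*I*n*x)) * F x with ha
  have key : ∀ (u v w : ℂ) (t : ℂ), cexp u * (cexp v * (cexp w * t)) = cexp (u+v+w) * t := by
    intros u v w t; rw [Complex.exp_add, Complex.exp_add]; ring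
  have key2 : ∀ (u v : ℂ) (t : ℂ), cexp u * (cexp v * t) = cexp (u+v) * t := by
    intros u v t; rw [Complex.exp_add]; ring
  have hrec : ∀ n : ℤ, a n = cexp (-(2*π*I*n*τ) + -(π*I*K*τ)) * a (n + K) := by
    intro n
    set G : ℂ → ℂ := fun z => cexp (-(2*π*I*n*z)) * F z with hG
    have hGd : Differentiable ℂ G :=
      (((differentiable_const _).mul differentiable_id).neg.cexp).mul hFd
    have hGper : ∀ z, G (z + 1) = G z := by
      intro z
      simp only [hG]
      rw [hF1 z]
      congr 1
      rw [show -(2*π*I*n*(z+1)) = -(2*π*I*n*z) + (-n : ℤ) * (2*π*I) by push_cast; ring,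
        Complex.exp_add, Complex.exp_int_mul_two_pi_mul_I, mul_one]
    have h := shift_integral G hGd hGper τ
    have heq : ∀ x : ℝ, G (x + τ)
        = cexp (-(2*π*I*n*τ) + -(π*I*K*τ)) * (cexp (-(2*π*I*(n + K)*x)) * F x) := by
      intro x
      simp only [hG]
      rw [hF2 x, key, key2]
      congr 2
      push_cast
      ring
    calc a n = ∫ x in (0:ℝ)..1, G (x + τ) := h.symm
      _ = ∫ x in (0:ℝ)..1, cexp (-(2*π*I*n*τ) + -(π*I*K*τ)) * (cexp (-(2*π*I*(n + K)*x)) * F x) :=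
          intervalIntegral.integral_congr fun x _ => heq x
      _ = cexp (-(2*π*I*n*τ) + -(π*I*K*τ)) * a (n + K) := by
          rw [intervalIntegral.integral_const_mul]
          congr 1
          refine intervalIntegral.integral_congr fun x _ => ?_
          congr 2
          push_cast
          ring
  have step_up : ∀ n : ℤ, a n = 0 → a (n + K) = 0 := by
    intro n hn
    have h := hrec n
    rw [hn] at h
    exact (mul_eq_zero.mp h.symm).resolve_left (Complex.exp_ne_zero _)
  have step_down : ∀ n : ℤ, a (n + K) = 0 → a n = 0 := by
    intro n hn
    rw [hrec n, hn, mul_zero]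
  have base : ∀ r : ℤ, 0 ≤ r → r < K → a r = 0 := by
    intro r hr0 hrK
    have hrK' : r.toNat < K := by omega
    have := h0 ⟨r.toNat, hrK'⟩
    simpa only [ha, show ((r.toNat : ℕ) : ℂ) = (r : ℂ) by
      rw [← Int.cast_natCast, Int.toNat_of_nonneg hr0]] using this
  have all : ∀ n : ℤ, a n = 0 := by
    intro m
    have hKz : (0:ℤ) < (K:ℤ) := by exact_mod_cast hK
    have hm : m = m % K + (m / K) * K := by
      rw [add_comm, mul_comm]; exact (Int.mul_ediv_add_emod m K).symm
    have hr0 : 0 ≤ m % K := Int.emod_nonneg m (by omega)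
    have hrK : m % K < K := Int.emod_lt_of_pos m hKz
    set r := m % K
    have main : ∀ q : ℤ, a (r + q * K) = 0 := by
      intro q
      induction q using Int.induction_on with
      | zero => simpa using base r hr0 hrK
      | succ i ih =>
          have := step_up (r + i * K) ih
          rwa [show r + i*K + K = r + (i+1)*K by ring] at this
      | pred i ih =>
          apply step_down
          rwa [show r + (-i-1)*K + K = r + -i*K by ring]
    have := main (m / K)
    rwa [← hm] at this
  have hF0 : ∀ x : ℝ, F x = 0 := by
    refine fourier_unique (fun x : ℝ => F x) (hFd.continuous.comp continuous_ofReal) ?_ ?_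
    · intro x; simpa using hF1 x
    · intro n; exact all n
  funext z
  have hanal : AnalyticOnNhd ℂ F Set.univ :=
    hFd.differentiableOn.analyticOnNhd isOpen_univ
  have hfreq : ∃ᶠ w in 𝓝[≠] (0:ℂ), F w = 0 := by
    have htend : Tendsto (fun n : ℕ => ((1/(n+1) : ℝ) : ℂ)) atTop (𝓝[≠] (0:ℂ)) := by
      apply tendsto_nhdsWithin_of_tendsto_nhds_of_eventually_within
      · have : Tendsto (fun n : ℕ => (1/(n+1) : ℝ)) atTop (𝓝 0) :=
          tendsto_one_div_add_atTop_nhds_zero_nat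
        exact (Complex.continuous_ofReal.tendsto 0).comp this
      · filter_upwards with n
        simp only [Set.mem_compl_iff, Set.mem_singleton_iff]
        intro h
        have h1 : (1/(n+1) : ℝ) = 0 := by exact_mod_cast h
        have h2 : (0:ℝ) < 1/(n+1) := by positivity
        linarith
    exact htend.frequently (Frequently.of_forall fun n => hF0 _)
  have := hanal.eqOn_zero_of_preconnected_of_frequently_eq_zero isPreconnected_univ
    (Set.mem_univ 0) hfreq
  exact this (Set.mem_univ z)

/-! ### The basis theta functions, built from the Jacobi theta function -/

def Fb (K : ℕ) (τ : ℂ) (r : ℕ) : ℂ → ℂ := fun z =>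
  cexp (π*I*r^2*τ/K) * (cexp (2*π*I*r*z) * jacobiTheta₂ ((K:ℂ)*z + r*τ) ((K:ℂ)*τ))

lemma jt_add_nat (w τ' : ℂ) (n : ℕ) : jacobiTheta₂ (w + n) τ' = jacobiTheta₂ w τ' := by
  induction n with
  | zero => simp
  | succ k ih =>
      rw [show w + ((k+1 : ℕ):ℂ) = (w + k) + 1 by push_cast; ring, jacobiTheta₂_add_left, ih]

lemma him (K : ℕ) (hK : 0 < K) {τ : ℂ} (hτ : 0 < τ.im) : 0 < ((K:ℂ)*τ).im := by
  have : ((K:ℂ)*τ).im = (K:ℝ) * τ.im := by simp [Complex.mul_im]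
  rw [this]
  exact mul_pos (by exact_mod_cast hK) hτ

lemma Fb_diff (K : ℕ) (hK : 0 < K) {τ : ℂ} (hτ : 0 < τ.im) (r : ℕ) :
    Differentiable ℂ (Fb K τ r) := by
  refine (differentiable_const _).mul ?_
  refine (((differentiable_const _).mul differentiable_id).cexp).mul ?_
  intro z
  exact (differentiableAt_jacobiTheta₂_fst _ (him K hK hτ)).comp z
    (((differentiable_const ((K:ℂ))).mul differentiable_id).add_const _ |>.differentiableAt)

lemma Fb_per (K : ℕ) (τ : ℂ) (r : ℕ) (z : ℂ) : Fb K τ r (z + 1) = Fb K τ r z := by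
  unfold Fb
  rw [show (K:ℂ)*(z+1) + r*τ = ((K:ℂ)*z + r*τ) + (K:ℕ) by push_cast; ring, jt_add_nat]
  congr 1
  rw [show 2*(π:ℂ)*I*r*(z+1) = 2*π*I*r*z + (r:ℤ)*(2*π*I) by push_cast; ring,
    Complex.exp_add, Complex.exp_int_mul_two_pi_mul_I, mul_one]

lemma Fb_quasi (K : ℕ) (τ : ℂ) (r : ℕ) (z : ℂ) :
    Fb K τ r (z + τ) = cexp (-(π * I * K * τ)) * (cexp (-(2 * π * I * K * z)) * Fb K τ r z) := by
  unfold Fb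
  rw [show (K:ℂ)*(z+τ) + r*τ = ((K:ℂ)*z + r*τ) + (K:ℂ)*τ by ring, jacobiTheta₂_add_left']
  simp only [← mul_assoc, ← Complex.exp_add]
  congr 2
  ring

lemma int_exp_unit (j : ℤ) :
    (∫ x in (0:ℝ)..1, cexp ((2*π*I*j) * x)) = if j = 0 then 1 else 0 := by
  by_cases h : j = 0
  · simp [h]
  · have hc0 : (2*(π:ℂ)*I*j) ≠ 0 := by
      simp only [ne_eq, mul_eq_zero, Complex.I_ne_zero, or_false, false_or]
      push_neg
      refine ⟨⟨two_ne_zero, ?_⟩, ?_⟩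
      · exact_mod_cast Real.pi_ne_zero
      · exact_mod_cast h
    rw [if_neg h, integral_exp_mul_complex hc0]
    rw [show (2*(π:ℂ)*I*j) * (1:ℝ) = (j:ℤ) * (2*π*I) by push_cast; ring,
      Complex.exp_int_mul_two_pi_mul_I]
    simp

lemma Fb_coeff (K : ℕ) (hK : 0 < K) {τ : ℂ} (hτ : 0 < τ.im) (r m : ℕ) (hr : r < K) (hm : m < K) :
    (∫ x in (0:ℝ)..1, cexp (-(2*π*I*m*x)) * Fb K τ r x)
      = if m = r then cexp (π*I*r^2*τ/K) else 0 := by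
  set c : ℤ → ℂ := fun n => cexp (π*I*(r:ℂ)^2*τ/K + 2*π*I*n*r*τ + π*I*n^2*K*τ) with hc
  set g : ℤ → ℝ → ℂ := fun n x => c n * cexp ((2*π*I*((n:ℤ)*K + r - m : ℤ)) * x) with hg
  have habs : ∀ (n : ℤ) (x : ℝ), ‖g n x‖ = ‖c n‖ := by
    intro n x
    rw [hg]
    simp only [norm_mul, Complex.norm_exp]
    rw [show ((2*(π:ℂ)*I*((n:ℤ)*K + r - m : ℤ)) * x).re = 0 by
      simp [Complex.mul_re, Complex.mul_im]]
    simp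
  have hsum_c : Summable (fun n : ℤ => ‖c n‖) := by
    have h1 : Summable (fun n : ℤ => jacobiTheta₂_term n ((r:ℂ)*τ) ((K:ℂ)*τ)) :=
      (summable_jacobiTheta₂_term_iff _ _).mpr (him K hK hτ)
    have h2 := (summable_norm_iff.mpr h1).mul_left ‖cexp (π*I*(r:ℂ)^2*τ/K)‖
    refine h2.congr fun n => ?_
    rw [← norm_mul, hc]
    simp only [jacobiTheta₂_term, ← Complex.exp_add]
    congr 2
    ring
  have hint : ∀ x : ℝ, cexp (-(2*π*I*m*x)) * Fb K τ r x = ∑' n : ℤ, g n x := by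
    intro x
    rw [Fb, jacobiTheta₂, ← tsum_mul_left, ← tsum_mul_left, ← tsum_mul_left]
    refine tsum_congr fun n => ?_
    rw [hg, hc]
    simp only [jacobiTheta₂_term, ← Complex.exp_add]
    congr 1
    push_cast
    ring
  have hcont : ∀ n : ℤ, Continuous (g n) :=
    fun n => continuous_const.mul ((continuous_const.mul Complex.continuous_ofReal).cexp)
  have hswap : (∫ x in (0:ℝ)..1, ∑' n : ℤ, g n x) = ∑' n : ℤ, ∫ x in (0:ℝ)..1, g n x := by
    rw [intervalIntegral.integral_of_le zero_le_one]
    have := MeasureTheory.integral_tsum_of_summable_integral_norm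
      (μ := volume.restrict (Set.Ioc (0:ℝ) 1))
      (F := g) (fun n => (hcont n).integrableOn_Ioc) ?_
    · rw [← this]
      refine tsum_congr fun n => ?_
      rw [intervalIntegral.integral_of_le zero_le_one]
    · refine hsum_c.congr fun n => ?_
      have heq : (∫ x in Set.Ioc (0:ℝ) 1, ‖g n x‖) = ∫ _ in Set.Ioc (0:ℝ) 1, ‖c n‖ :=
        integral_congr_ae (Filter.Eventually.of_forall fun x => habs n x)
      rw [heq, setIntegral_const]
      simp
  have hterm : ∀ n : ℤ, (∫ x in (0:ℝ)..1, g n x)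
      = c n * (if ((n:ℤ)*K + r - m : ℤ) = 0 then 1 else 0) := by
    intro n
    rw [hg]
    simp only []
    rw [intervalIntegral.integral_const_mul, int_exp_unit]
  rw [show (∫ x in (0:ℝ)..1, cexp (-(2*π*I*m*x)) * Fb K τ r x)
      = ∫ x in (0:ℝ)..1, ∑' n : ℤ, g n x from
    intervalIntegral.integral_congr fun x _ => hint x, hswap]
  by_cases hmr : m = r
  · subst hmr
    rw [if_pos rfl]
    rw [tsum_eq_single 0 ?_]
    · rw [hterm 0]
      simp only [Int.cast_zero, zero_mul, add_sub_cancel_right]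
      rw [if_pos (by simp), mul_one, hc]
      norm_num
    · intro n hn
      rw [hterm n, if_neg, mul_zero]
      intro h
      have hK0 : (K:ℤ) ≠ 0 := by exact_mod_cast hK.ne'
      have hn0 : n * (K:ℤ) = 0 := by omega
      exact hn (by
        rcases mul_eq_zero.mp hn0 with h1 | h1
        · exact h1
        · exact absurd h1 hK0)
  · rw [if_neg hmr]
    rw [tsum_eq_single 0 ?_, hterm 0, if_neg, mul_zero]
    · simp only [Int.cast_zero, zero_mul]
      intro h
      have : (r:ℤ) = m := by omega
      exact hmr (by exact_mod_cast this.symm)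
    · intro n hn
      rw [hterm n, if_neg, mul_zero]
      intro h
      have h1 : n * (K:ℤ) = (m:ℤ) - r := by omega
      have hKz : (0:ℤ) < K := by exact_mod_cast hK
      rcases lt_trichotomy n 0 with h2 | h2 | h2
      · nlinarith [Int.le_of_lt h2]
      · exact hn h2
      · nlinarith

end ThetaDimAux

open Complex MeasureTheory ThetaDimAux

/-- The space of level-`K` theta functions has complex dimension exactly `K`. -/
theorem thetaSpace_finrank (K : ℕ) (hK : 0 < K) (τ : ℂ) (hτ : 0 < τ.im) :
    Module.finrank ℂ (thetaSpace K τ) = K := by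
  classical
  -- the coefficient map
  have hintegrable : ∀ (F : ℂ → ℂ), Continuous F → ∀ m : ℕ,
      IntervalIntegrable (fun x : ℝ => cexp (-(2*π*I*(m:ℂ)*x)) * F x) volume 0 1 := by
    intro F hF m
    exact (((continuous_const.mul Complex.continuous_ofReal).neg.cexp).mul
      (hF.comp Complex.continuous_ofReal)).intervalIntegrable 0 1
  let L : thetaSpace K τ →ₗ[ℂ] (Fin K → ℂ) :=
    { toFun := fun F => fun r => ∫ x in (0:ℝ)..1, cexp (-(2*π*I*((r:ℕ):ℂ)*x)) * (F : ℂ → ℂ) x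
      map_add' := by
        intro F G
        funext r
        have hF : Continuous (F : ℂ → ℂ) := F.2.1.continuous
        have hG : Continuous (G : ℂ → ℂ) := G.2.1.continuous
        have key : ∀ x : ℝ, cexp (-(2*π*I*((r:ℕ):ℂ)*x)) * ((F + G : thetaSpace K τ) : ℂ → ℂ) x
            = cexp (-(2*π*I*((r:ℕ):ℂ)*x)) * (F : ℂ → ℂ) x
              + cexp (-(2*π*I*((r:ℕ):ℂ)*x)) * (G : ℂ → ℂ) x := fun x => by
          show cexp _ * ((F : ℂ → ℂ) x + (G : ℂ → ℂ) x) = _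
          ring
        show (∫ x in (0:ℝ)..1, cexp (-(2*π*I*((r:ℕ):ℂ)*x)) * ((F + G : thetaSpace K τ) : ℂ → ℂ) x)
          = (∫ x in (0:ℝ)..1, cexp (-(2*π*I*((r:ℕ):ℂ)*x)) * (F : ℂ → ℂ) x)
            + ∫ x in (0:ℝ)..1, cexp (-(2*π*I*((r:ℕ):ℂ)*x)) * (G : ℂ → ℂ) x
        rw [intervalIntegral.integral_congr (fun x _ => key x)]
        exact intervalIntegral.integral_add (hintegrable _ hF r) (hintegrable _ hG r)
      map_smul' := by
        intro a F
        funext r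
        have key : ∀ x : ℝ, cexp (-(2*π*I*((r:ℕ):ℂ)*x)) * ((a • F : thetaSpace K τ) : ℂ → ℂ) x
            = a * (cexp (-(2*π*I*((r:ℕ):ℂ)*x)) * (F : ℂ → ℂ) x) := fun x => by
          show cexp _ * (a * (F : ℂ → ℂ) x) = _
          ring
        show (∫ x in (0:ℝ)..1, cexp (-(2*π*I*((r:ℕ):ℂ)*x)) * ((a • F : thetaSpace K τ) : ℂ → ℂ) x)
          = a * ∫ x in (0:ℝ)..1, cexp (-(2*π*I*((r:ℕ):ℂ)*x)) * (F : ℂ → ℂ) x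
        rw [intervalIntegral.integral_congr (fun x _ => key x)]
        exact intervalIntegral.integral_const_mul a _ }
  have hinj : Function.Injective L := by
    rw [injective_iff_map_eq_zero]
    intro F hF
    obtain ⟨h1, h2, h3⟩ := F.2
    have := theta_eq_zero K hK τ hτ (F : ℂ → ℂ) h1 h2 h3 (fun r => congrFun hF r)
    exact Subtype.ext this
  have hFbmem : ∀ r : ℕ, Fb K τ r ∈ thetaSpace K τ := fun r =>
    ⟨Fb_diff K hK hτ r, Fb_per K τ r, Fb_quasi K τ r⟩
  have hsingle : ∀ r : Fin K, (Pi.single r (1:ℂ) : Fin K → ℂ) ∈ LinearMap.range L := by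
    intro r
    set cr : ℂ := cexp (π*I*((r:ℕ):ℂ)^2*τ/K) with hcr
    have hcr0 : cr ≠ 0 := Complex.exp_ne_zero _
    refine ⟨cr⁻¹ • ⟨Fb K τ (r:ℕ), hFbmem r⟩, ?_⟩
    rw [LinearMap.map_smul]
    funext m
    have := Fb_coeff K hK hτ (r:ℕ) (m:ℕ) r.2 m.2
    show cr⁻¹ * (∫ x in (0:ℝ)..1, cexp (-(2*π*I*((m:ℕ):ℂ)*x)) * Fb K τ (r:ℕ) x) = _
    rw [this]
    rcases eq_or_ne m r with h | h
    · rw [if_pos (by rw [h]), h, Pi.single_eq_same, ← hcr, inv_mul_cancel₀ hcr0]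
    · rw [if_neg (fun hc => h (Fin.ext hc)), Pi.single_eq_of_ne h, mul_zero]
  have hsurj : Function.Surjective L := by
    rw [← LinearMap.range_eq_top]
    rw [eq_top_iff]
    intro w _
    have hw : w = ∑ r : Fin K, w r • (Pi.single r (1:ℂ) : Fin K → ℂ) := by
      rw [show (fun r : Fin K => w r • (Pi.single r (1:ℂ) : Fin K → ℂ))
          = fun r : Fin K => Pi.single r (w r) from funext fun r => by
        funext j
        rcases eq_or_ne j r with h | h
        · subst h; simp
        · simp [Pi.single_eq_of_ne h]]
      exact (Finset.univ_sum_single w).symm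
    rw [hw]
    exact Submodule.sum_mem _ fun r _ => Submodule.smul_mem _ _ (hsingle r)
  have equiv := LinearEquiv.ofBijective L ⟨hinj, hsurj⟩
  rw [equiv.finrank_eq, Module.finrank_fin_fun]
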